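/- Let 0 < a ≤ 1/√3, l a natural number with l ≥ 1, and β ≥ -2√3 - 6·log(1 - 1/√3). Then ∫₀^{2π} (1 + a² - 2a·cos x)^{-l} dx ≤ ∫₀^{2π} exp(β·l·a² + 2·l·a·cos x) dx. -/

import Mathlib

open Real

/-- Shifted log series: `∑ x^(n+2)/(n+2) = -log(1-x) - x`. -/
lemma hasSum_log_aux {x : ℝ} (h : |x| < 1) :
    HasSum (fun n : ℕ => x ^ (n + 2) / (n + 2)) (-Real.log (1 - x) - x) := by
  have h0 := Real.hasSum_pow_div_log_of_abs_lt_one h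
  have h1 := (hasSum_nat_add_iff' (f := fun n : ℕ => x ^ (n + 1) / (n + 1)) 1).2 h0
  simp only [Finset.range_one, Finset.sum_singleton, Nat.cast_zero, pow_one] at h1
  convert h1 using 2 with n
  · rfl
  · push_cast; ring_nf
  · norm_num

lemma auxB {x y : ℝ} (hxy : |x| ≤ y) (hy : y < 1) :
    -Real.log (1 - x) - x ≤ -Real.log (1 - y) - y := by
  have hx1 : |x| < 1 := lt_of_le_of_lt hxy hy
  have hy1 : |y| < 1 := by
    rw [abs_of_nonneg ((abs_nonneg x).trans hxy)]; exact hy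
  refine hasSum_le (fun n => ?_) (hasSum_log_aux hx1) (hasSum_log_aux hy1)
  have hn : (0:ℝ) < (n:ℝ) + 2 := by positivity
  apply div_le_div_of_nonneg_right ?_ hn.le |>.trans_eq rfl
  calc x ^ (n + 2) ≤ |x ^ (n + 2)| := le_abs_self _
    _ = |x| ^ (n + 2) := by rw [abs_pow]
    _ ≤ y ^ (n + 2) := pow_le_pow_left₀ (abs_nonneg x) hxy _

lemma auxC {x s : ℝ} (hx : 0 ≤ x) (hxs : x ≤ s) (hs : s < 1) :
    (-Real.log (1 - x) - x) * s ^ 2 ≤ (-Real.log (1 - s) - s) * x ^ 2 := by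
  have hx1 : |x| < 1 := by rw [abs_of_nonneg hx]; exact lt_of_le_of_lt hxs hs
  have hs1 : |s| < 1 := by rw [abs_of_nonneg (hx.trans hxs)]; exact hs
  refine hasSum_le (fun n => ?_) ((hasSum_log_aux hx1).mul_right (s ^ 2))
    ((hasSum_log_aux hs1).mul_right (x ^ 2))
  have hn : (0:ℝ) < (n:ℝ) + 2 := by positivity
  rw [div_mul_eq_mul_div, div_mul_eq_mul_div]
  apply div_le_div_of_nonneg_right ?_ hn.le
  have hpow : x ^ n ≤ s ^ n := pow_le_pow_left₀ hx hxs n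
  calc x ^ (n + 2) * s ^ 2 = x ^ n * (x ^ 2 * s ^ 2) := by ring
    _ ≤ s ^ n * (x ^ 2 * s ^ 2) := by
        apply mul_le_mul_of_nonneg_right hpow; positivity
    _ = s ^ (n + 2) * x ^ 2 := by ring

theorem stmt_1 (a β : ℝ) (l : ℕ) (ha : 0 < a) (ha' : a ≤ 1 / Real.sqrt 3) (hl : 1 ≤ l)
    (hβ : β ≥ -2 * Real.sqrt 3 - 6 * Real.log (1 - 1 / Real.sqrt 3)) :
    ∫ x in (0:ℝ)..(2 * Real.pi), (1 + a ^ 2 - 2 * a * Real.cos x)⁻¹ ^ l ≤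
      ∫ x in (0:ℝ)..(2 * Real.pi), Real.exp (β * l * a ^ 2 + 2 * l * a * Real.cos x) := by
  have hs3 : (1:ℝ) < Real.sqrt 3 := by
    have : (1:ℝ) = Real.sqrt 1 := (Real.sqrt_one).symm
    rw [this]; exact Real.sqrt_lt_sqrt (by norm_num) (by norm_num)
  have hs3' : (0:ℝ) < Real.sqrt 3 := by linarith
  set s : ℝ := 1 / Real.sqrt 3 with hs_def
  have hs_pos : 0 < s := by positivity
  have hs_lt1 : s < 1 := by rw [hs_def, div_lt_one hs3']; exact hs3
  have ha1 : a < 1 := lt_of_le_of_lt ha' hs_lt1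
  have hs_sq : s ^ 2 = 1 / 3 := by
    rw [hs_def, div_pow, one_pow, Real.sq_sqrt (by norm_num : (3:ℝ) ≥ 0)]
  -- key pointwise bound
  have key : ∀ c : ℝ, |c| ≤ 1 → (1 + a ^ 2 - 2 * a * c)⁻¹ ≤ Real.exp (β * a ^ 2 + 2 * a * c) := by
    intro c hc
    have hac : |a * c| ≤ a := by
      rw [abs_mul, abs_of_pos ha]
      calc a * |c| ≤ a * 1 := by nlinarith
        _ = a := mul_one a
    have hac1 : a * c < 1 := lt_of_le_of_lt (le_trans (le_abs_self _) hac) ha1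
    have hupos : (0:ℝ) < 1 - a * c := by linarith
    have hden : (1 - a * c) ^ 2 ≤ 1 + a ^ 2 - 2 * a * c := by
      have hc2 : c ^ 2 ≤ 1 := by nlinarith [abs_nonneg c, sq_abs c]
      nlinarith [sq_nonneg a]
    have hden_pos : (0:ℝ) < 1 + a ^ 2 - 2 * a * c := lt_of_lt_of_le (by positivity) hden
    -- step 1: series bounds
    have h1 : -Real.log (1 - a * c) - a * c ≤ -Real.log (1 - a) - a := auxB hac ha1
    have h2 : (-Real.log (1 - a) - a) * s ^ 2 ≤ (-Real.log (1 - s) - s) * a ^ 2 :=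
      auxC ha.le ha' hs_lt1
    have h3 : -Real.log (1 - a) - a ≤ 3 * (-Real.log (1 - s) - s) * a ^ 2 := by
      rw [hs_sq] at h2; linarith
    have hBs : 3 * (-Real.log (1 - s) - s) * a ^ 2 ≤ β / 2 * a ^ 2 := by
      have h3s : 3 * s = Real.sqrt 3 := by
        rw [hs_def, mul_one_div, div_eq_iff hs3'.ne']
        exact (Real.mul_self_sqrt (by norm_num)).symm
      have : 3 * (-Real.log (1 - s) - s) ≤ β / 2 := by
        have := hβ
        rw [ge_iff_le] at this
        nlinarith [h3s]
      nlinarith [sq_nonneg a]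
    have hmain : -2 * (Real.log (1 - a * c)) - 2 * (a * c) ≤ β * a ^ 2 := by
      have := h1.trans (h3.trans hBs)
      linarith
    -- step 2: exponentials
    have hexp : Real.exp (-(β * a ^ 2 + 2 * a * c)) ≤ 1 + a ^ 2 - 2 * a * c := by
      calc Real.exp (-(β * a ^ 2 + 2 * a * c)) ≤ Real.exp (Real.log ((1 - a * c) ^ 2)) := by
            apply Real.exp_le_exp.2
            rw [Real.log_pow]
            push_cast
            linarith
        _ = (1 - a * c) ^ 2 := Real.exp_log (by positivity)
        _ ≤ 1 + a ^ 2 - 2 * a * c := hden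
    calc (1 + a ^ 2 - 2 * a * c)⁻¹ ≤ (Real.exp (-(β * a ^ 2 + 2 * a * c)))⁻¹ :=
          inv_anti₀ (Real.exp_pos _) hexp
      _ = Real.exp (β * a ^ 2 + 2 * a * c) := by rw [← Real.exp_neg, neg_neg]
  -- pointwise bound with powers
  have keyl : ∀ x : ℝ, (1 + a ^ 2 - 2 * a * Real.cos x)⁻¹ ^ l ≤
      Real.exp (β * l * a ^ 2 + 2 * l * a * Real.cos x) := by
    intro x
    have hc := key (Real.cos x) (Real.abs_cos_le_one x)
    have h0 : (0:ℝ) ≤ (1 + a ^ 2 - 2 * a * Real.cos x)⁻¹ := by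
      apply inv_nonneg.2
      nlinarith [Real.neg_one_le_cos x, Real.cos_le_one x, sq_nonneg (1 - a * Real.cos x),
        sq_nonneg a]
    calc (1 + a ^ 2 - 2 * a * Real.cos x)⁻¹ ^ l
        ≤ (Real.exp (β * a ^ 2 + 2 * a * Real.cos x)) ^ l := pow_le_pow_left₀ h0 hc l
      _ = Real.exp (β * l * a ^ 2 + 2 * l * a * Real.cos x) := by
          rw [← Real.exp_nat_mul]; ring_nf
  -- integrability
  have hden_pos : ∀ x : ℝ, (0:ℝ) < 1 + a ^ 2 - 2 * a * Real.cos x := by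
    intro x
    nlinarith [Real.neg_one_le_cos x, Real.cos_le_one x, sq_nonneg (1 - a * Real.cos x),
      sq_nonneg (1 - a), sq_nonneg a]
  have hcont1 : Continuous fun x : ℝ => (1 + a ^ 2 - 2 * a * Real.cos x)⁻¹ ^ l := by
    apply Continuous.pow
    exact (continuous_const.sub ((continuous_const.mul Real.continuous_cos))).inv₀
      fun x => (hden_pos x).ne'
  have hcont2 : Continuous fun x : ℝ => Real.exp (β * l * a ^ 2 + 2 * l * a * Real.cos x) :=
    (continuous_const.add (continuous_const.mul Real.continuous_cos)).rexp
  exact intervalIntegral.integral_mono_on (by positivity)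
    (hcont1.intervalIntegrable _ _) (hcont2.intervalIntegrable _ _)
    fun x _ => keyl x
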